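/- Let P be a hereditary graph property. Then F_⊆(P) = F_≤(P) if and only if for every H ∈ F_⊆(P) and every pair e of nonadjacent vertices of H, there is some G ∈ F_⊆(P) such that G is an induced subgraph of H+e (the graph obtained from H by adding the edge e). -/

import Mathlib

attribute [local instance] Classical.propDecidable

open SimpleGraph

/-- A finite simple graph, bundled. -/
structure FGraph : Type 1 where
  V : Type
  [fin : Fintype V]
  graph : SimpleGraph V

attribute [instance] FGraph.fin

namespace FGraph

/-- `G.IsInduced H` : `G` is isomorphic to an induced subgraph of `H`. -/
def IsInduced (G H : FGraph) : Prop := Nonempty (G.graph ↪g H.graph)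

/-- `G.IsSub H` : `G` is isomorphic to a subgraph of `H`. -/
def IsSub (G H : FGraph) : Prop := ∃ f : G.graph →g H.graph, Function.Injective f

/-- `G.Iso H` : `G` and `H` are isomorphic. -/
def Iso (G H : FGraph) : Prop := Nonempty (G.graph ≃g H.graph)

/-- The induced subgraph of `G` on a set `s` of vertices. -/
noncomputable def induce (G : FGraph) (s : Set G.V) : FGraph := ⟨↥s, G.graph.induce s⟩

end FGraph

/-- A class of finite graphs. -/
abbrev GProp : Type 1 := FGraph → Prop

/-- A graph property: a nonempty isomorphism-closed class of finite graphs,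
each having at least one vertex. -/
structure IsGProp (P : GProp) : Prop where
  nonempty : ∃ G, P G
  vertexNonempty : ∀ G, P G → Nonempty G.V
  isoClosed : ∀ G H, G.Iso H → P G → P H

namespace GProp

/-- The product `P ∘ Q` of two classes of graphs. -/
def prod (P Q : GProp) : GProp := fun G =>
  Nonempty G.V ∧ ∃ s : Set G.V,
    (s.Nonempty → P (G.induce s)) ∧ ((sᶜ : Set G.V).Nonempty → Q (G.induce (sᶜ : Set G.V)))

/-- The product `∏ i, Ps i` of an indexed family of classes of graphs:
the vertex set is partitioned into the (possibly empty) preimages of a map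
to the index set, and every nonempty part must induce a graph in the
corresponding class. -/
def iProd {I : Type*} (Ps : I → GProp) : GProp := fun G =>
  Nonempty G.V ∧ ∃ f : G.V → I,
    ∀ i, (f ⁻¹' {i}).Nonempty → Ps i (G.induce (f ⁻¹' {i}))

end GProp

/-- Closed under induced subgraphs with at least one vertex. -/
def IndHereditary (P : GProp) : Prop :=
  ∀ G H : FGraph, P G → H.IsInduced G → Nonempty H.V → P H

/-- Closed under subgraphs with at least one vertex. -/
def Hereditary (P : GProp) : Prop :=
  ∀ G H : FGraph, P G → H.IsSub G → Nonempty H.V → P H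

/-- Closed under induced supergraphs. -/
def GeqHereditary (P : GProp) : Prop :=
  ∀ G H : FGraph, P H → H.IsInduced G → P G


/-- `F_⊆(P)`: minimal forbidden subgraphs of `P`, i.e. graphs `H ∉ P` all of
whose proper subgraphs (subgraphs not containing `H` back) are in `P`. -/
def ForbSub (P : GProp) : GProp := fun H =>
  Nonempty H.V ∧ ¬ P H ∧
    ∀ K : FGraph, Nonempty K.V → K.IsSub H → ¬ H.IsSub K → P K

/-- `F_≤(P)`: minimal forbidden induced subgraphs of `P`. -/
def ForbInd (P : GProp) : GProp := fun H =>
  Nonempty H.V ∧ ¬ P H ∧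
    ∀ K : FGraph, Nonempty K.V → K.IsInduced H → ¬ H.IsInduced K → P K

/-- `H + e`: the graph obtained from `H` by adding the edge `{a, b}`. -/
def addEdge (H : FGraph) (a b : H.V) : FGraph :=
  ⟨H.V, H.graph ⊔ SimpleGraph.fromEdgeSet {s(a, b)}⟩

section Aux

open SimpleGraph

namespace FGraph

lemma isSub_refl (G : FGraph) : G.IsSub G := ⟨SimpleGraph.Hom.id, fun _ _ h => h⟩

lemma IsInduced.isSub {G H : FGraph} (h : G.IsInduced H) : G.IsSub H := by
  obtain ⟨e⟩ := h
  exact ⟨e.toHom, e.injective⟩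

lemma IsSub.trans {G H K : FGraph} (h1 : G.IsSub H) (h2 : H.IsSub K) : G.IsSub K := by
  obtain ⟨f, hf⟩ := h1; obtain ⟨g, hg⟩ := h2
  exact ⟨g.comp f, hg.comp hf⟩

lemma IsInduced.trans {G H K : FGraph} (h1 : G.IsInduced H) (h2 : H.IsInduced K) :
    G.IsInduced K := by
  obtain ⟨e⟩ := h1; obtain ⟨f⟩ := h2
  exact ⟨f.comp e⟩

end FGraph

/-- A bijective graph embedding is an isomorphism. -/
noncomputable def isoOfBij {V W : Type} {G : SimpleGraph V} {H : SimpleGraph W}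
    (e : G ↪g H) (hb : Function.Bijective e) : G ≃g H where
  toEquiv := Equiv.ofBijective e hb
  map_rel_iff' := e.map_rel_iff

lemma adj_of_mapEdgeSet_surj {V W : Type} {G : SimpleGraph V} {H : SimpleGraph W}
    (f : G →g H) (hf : Function.Injective f) (hs : Function.Surjective f.mapEdgeSet)
    {x y : V} (h : H.Adj (f x) (f y)) : G.Adj x y := by
  obtain ⟨⟨e, he⟩, hmapE⟩ := hs ⟨s(f x, f y), h⟩
  have hval : Sym2.map f e = s(f x, f y) := congrArg Subtype.val hmapE
  clear hmapE
  revert he hval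
  induction e using Sym2.ind with
  | _ u v =>
    intro he hval
    rw [Sym2.map_pair_eq, Sym2.eq_iff] at hval
    have hadj : G.Adj u v := (G.mem_edgeSet).1 he
    rcases hval with ⟨h1, h2⟩ | ⟨h1, h2⟩
    · rwa [hf h1, hf h2] at hadj
    · rw [hf h1, hf h2] at hadj; exact hadj.symm

/-- A bijective, edge-surjective graph hom is an isomorphism. -/
noncomputable def isoOfHom {V W : Type} {G : SimpleGraph V} {H : SimpleGraph W}
    (f : G →g H) (hb : Function.Bijective f)
    (hs : Function.Surjective f.mapEdgeSet) : G ≃g H where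
  toEquiv := Equiv.ofBijective f hb
  map_rel_iff' := fun {x y} =>
    ⟨fun h => adj_of_mapEdgeSet_surj f hb.1 hs h, fun h => f.map_adj h⟩

lemma iso_of_sub_eq {G H : FGraph} (f : G.graph →g H.graph) (hf : Function.Injective f)
    (hvc : Nat.card H.V ≤ Nat.card G.V)
    (hec : Nat.card H.graph.edgeSet ≤ Nat.card G.graph.edgeSet) :
    Nonempty (G.graph ≃g H.graph) := by
  have hbij : Function.Bijective f := (Nat.bijective_iff_injective_and_card f).2
    ⟨hf, le_antisymm (Nat.card_le_card_of_injective f hf) hvc⟩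
  have hinj' := SimpleGraph.Hom.mapEdgeSet.injective f hf
  have hbij' : Function.Bijective f.mapEdgeSet := (Nat.bijective_iff_injective_and_card _).2
    ⟨hinj', le_antisymm (Nat.card_le_card_of_injective _ hinj') hec⟩
  exact ⟨isoOfHom f hbij hbij'.2⟩

lemma meas_le {G H : FGraph} (h : G.IsSub H) :
    Nat.card G.graph.edgeSet ≤ Nat.card H.graph.edgeSet := by
  obtain ⟨f, hf⟩ := h
  exact Nat.card_le_card_of_injective _ (SimpleGraph.Hom.mapEdgeSet.injective f hf)

lemma cardV_le {G H : FGraph} (h : G.IsSub H) : Nat.card G.V ≤ Nat.card H.V := by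
  obtain ⟨f, hf⟩ := h
  exact Nat.card_le_card_of_injective f hf

lemma isSub_of_iso {G H : FGraph} (e : G.graph ≃g H.graph) : G.IsSub H :=
  ⟨e.toEmbedding.toHom, e.toEmbedding.injective⟩

/-- `ForbSub` is closed under isomorphism. -/
lemma forbSub_iso {P : GProp} (hP : IsGProp P) {G H : FGraph} (e : G.graph ≃g H.graph)
    (hG : ForbSub P G) : ForbSub P H := by
  refine ⟨hG.1.map e.toEquiv, fun h => hG.2.1 (hP.isoClosed H G ⟨e.symm⟩ h),
    fun K hKne hKsub hHK => ?_⟩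
  refine hG.2.2 K hKne (hKsub.trans (isSub_of_iso e.symm)) (fun hGK => ?_)
  exact hHK ((isSub_of_iso e.symm).trans hGK)

/-- Any nonempty graph not in `P` contains a minimal forbidden subgraph. -/
lemma exists_forbSub (P : GProp) :
    ∀ H : FGraph, Nonempty H.V → ¬ P H → ∃ G, ForbSub P G ∧ G.IsSub H := by
  suffices h : ∀ n m (H : FGraph), Nat.card H.V = n → Nat.card H.graph.edgeSet = m →
      Nonempty H.V → ¬ P H → ∃ G, ForbSub P G ∧ G.IsSub H from
    fun H => h _ _ H rfl rfl
  intro n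
  induction n using Nat.strong_induction_on with
  | _ n ihn =>
    intro m
    induction m using Nat.strong_induction_on with
    | _ m ihm =>
      intro H hn hm hne hnP
      by_cases hH : ForbSub P H
      · exact ⟨H, hH, H.isSub_refl⟩
      · have hC : ¬ ∀ K : FGraph, Nonempty K.V → K.IsSub H → ¬ H.IsSub K → P K :=
          fun hc => hH ⟨hne, hnP, hc⟩
        push_neg at hC
        obtain ⟨K, hKne, hKsub, hHK, hKnP⟩ := hC
        have hv : Nat.card K.V ≤ n := hn ▸ cardV_le hKsub
        have he : Nat.card K.graph.edgeSet ≤ m := hm ▸ meas_le hKsub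
        rcases lt_or_eq_of_le hv with hv' | hv'
        · obtain ⟨G, hG, hGK⟩ := ihn _ hv' _ K rfl rfl hKne hKnP
          exact ⟨G, hG, hGK.trans hKsub⟩
        · rcases lt_or_eq_of_le he with he' | he'
          · obtain ⟨G, hG, hGK⟩ := ihm _ he' K hv' rfl hKne hKnP
            exact ⟨G, hG, hGK.trans hKsub⟩
          · exfalso
            obtain ⟨f, hf⟩ := hKsub
            obtain ⟨e⟩ := iso_of_sub_eq f hf (by omega) (by omega)
            exact hHK (isSub_of_iso e.symm)

/-- Any nonempty graph not in `P` contains a minimal forbidden induced subgraph. -/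
lemma exists_forbInd (P : GProp) :
    ∀ H : FGraph, Nonempty H.V → ¬ P H → ∃ G, ForbInd P G ∧ G.IsInduced H := by
  suffices h : ∀ n (H : FGraph), Nat.card H.V = n → Nonempty H.V → ¬ P H →
      ∃ G, ForbInd P G ∧ G.IsInduced H from fun H => h _ H rfl
  intro n
  induction n using Nat.strong_induction_on with
  | _ n ih =>
    intro H hn hne hnP
    by_cases hH : ForbInd P H
    · exact ⟨H, hH, ⟨SimpleGraph.Embedding.refl⟩⟩
    · have hC : ¬ ∀ K : FGraph, Nonempty K.V → K.IsInduced H → ¬ H.IsInduced K → P K :=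
        fun hc => hH ⟨hne, hnP, hc⟩
      push_neg at hC
      obtain ⟨K, hKne, hKind, hHK, hKnP⟩ := hC
      obtain ⟨e⟩ := hKind
      have hv : Nat.card K.V ≤ n := hn ▸ Nat.card_le_card_of_injective e e.injective
      rcases lt_or_eq_of_le hv with hv' | hv'
      · obtain ⟨G, hG, hGK⟩ := ih _ hv' K rfl hKne hKnP
        exact ⟨G, hG, hGK.trans ⟨e⟩⟩
      · exfalso
        have hb : Function.Bijective e := (Nat.bijective_iff_injective_and_card e).2
          ⟨e.injective, by omega⟩
        exact hHK ⟨(isoOfBij e hb).symm.toEmbedding⟩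

/-- `F_⊆(P) ⊆ F_≤(P)`, unconditionally. -/
lemma forbSub_imp_forbInd {P : GProp} {H : FGraph} (hH : ForbSub P H) : ForbInd P H := by
  refine ⟨hH.1, hH.2.1, fun K hKne hKind hHK => ?_⟩
  obtain ⟨e⟩ := hKind
  refine hH.2.2 K hKne ⟨e.toHom, e.injective⟩ ?_
  rintro ⟨g, hg⟩
  have h1 : Nat.card K.V ≤ Nat.card H.V := Nat.card_le_card_of_injective e e.injective
  have h2 : Nat.card H.V ≤ Nat.card K.V := Nat.card_le_card_of_injective g hg
  have hb : Function.Bijective e := (Nat.bijective_iff_injective_and_card e).2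
    ⟨e.injective, le_antisymm h1 h2⟩
  exact hHK ⟨(isoOfBij e hb).symm.toEmbedding⟩

/-- Any injective hom from a minimal forbidden subgraph into a graph in `F_≤(P)`
is surjective (for hereditary `P`). -/
lemma surj_of_forbSub_sub {P : GProp} (hher : Hereditary P) {H : FGraph} (hH : ForbInd P H)
    {G : FGraph} (hG : ForbSub P G) (f : G.graph →g H.graph) (hf : Function.Injective f) :
    Function.Surjective f := by
  by_contra hs
  simp only [Function.Surjective, not_forall, not_exists] at hs
  obtain ⟨x, hx⟩ := hs
  set s : Set H.V := Set.range f with hsdef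
  have hKind : (H.induce s).IsInduced H := ⟨SimpleGraph.Embedding.induce s⟩
  have hcard : Nat.card (H.induce s).V < Nat.card H.V := by
    rw [show Nat.card (H.induce s).V = Nat.card ↥s from rfl, Nat.card_coe_set_eq,
      ← Set.ncard_univ]
    refine Set.ncard_lt_ncard ⟨Set.subset_univ s, fun h => ?_⟩ (Set.toFinite _)
    obtain ⟨a, ha⟩ := h (Set.mem_univ x)
    exact hx a ha
  have hnind : ¬ H.IsInduced (H.induce s) := by
    rintro ⟨e⟩
    exact absurd (Nat.card_le_card_of_injective e e.injective) (by omega)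
  have hsne : Nonempty (H.induce s).V := ⟨⟨f hG.1.some, Set.mem_range_self _⟩⟩
  have hPK : P (H.induce s) := hH.2.2 _ hsne hKind hnind
  refine hG.2.1 (hher (H.induce s) G hPK
    ⟨⟨fun v => ⟨f v, Set.mem_range_self v⟩, fun h => by exact f.map_adj h⟩,
      fun u v h => hf (congrArg Subtype.val h)⟩ hG.1)

lemma mapEdgeSet_surj_of {V W : Type} {G : SimpleGraph V} {H : SimpleGraph W} (f : G →g H)
    (h : ∀ x y, H.Adj x y → ∃ u v, G.Adj u v ∧ f u = x ∧ f v = y) :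
    Function.Surjective f.mapEdgeSet := by
  rintro ⟨e, he⟩
  induction e using Sym2.ind with
  | _ x y =>
    obtain ⟨u, v, huv, hu, hv⟩ := h x y ((H.mem_edgeSet).1 he)
    refine ⟨⟨s(u, v), (G.mem_edgeSet).2 huv⟩, Subtype.ext ?_⟩
    show Sym2.map f s(u, v) = s(x, y)
    rw [Sym2.map_pair_eq, hu, hv]

end Aux
/-- for a hereditary graph property `P`, `F_⊆(P) = F_≤(P)` iff for
every `H ∈ F_⊆(P)` and every pair `a ≠ b` of nonadjacent vertices of `H`,
some `G ∈ F_⊆(P)` is an induced subgraph of `H + ab`. -/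
theorem statement_9 (P : GProp) (hP : IsGProp P) (hher : Hereditary P) :
    ForbSub P = ForbInd P ↔
      ∀ H, ForbSub P H → ∀ a b : H.V, a ≠ b → ¬ H.graph.Adj a b →
        ∃ G, ForbSub P G ∧ G.IsInduced (addEdge H a b) := by
  constructor
  · intro hEq H hH a b hab hnadj
    have hnP : ¬ P (addEdge H a b) :=
      fun hp => hH.2.1 (hher _ H hp
        ⟨(⟨id, fun h => Or.inl h⟩ : H.graph →g (addEdge H a b).graph),
          fun u v h => h⟩ hH.1)
    have hne : Nonempty (addEdge H a b).V := hH.1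
    obtain ⟨G, hGind, hGemb⟩ := exists_forbInd P _ hne hnP
    rw [← hEq] at hGind
    exact ⟨G, hGind, hGemb⟩
  · intro hcond
    funext H
    apply propext
    constructor
    · exact forbSub_imp_forbInd
    · intro hH
      obtain ⟨G₁, hG₁, hG₁sub⟩ := exists_forbSub P H hH.1 hH.2.1
      set S : Set ℕ :=
        {n | ∃ G, ForbSub P G ∧ G.IsSub H ∧ Nat.card G.graph.edgeSet = n} with hSdef
      have hSne : S.Nonempty := ⟨_, G₁, hG₁, hG₁sub, rfl⟩
      have hSbdd : BddAbove S := by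
        refine ⟨Nat.card H.graph.edgeSet, ?_⟩
        rintro n ⟨G, _, hsub, rfl⟩
        exact meas_le hsub
      obtain ⟨G₀, hG₀, hG₀sub, hG₀m⟩ := Nat.sSup_mem hSne hSbdd
      have hmax : ∀ G, ForbSub P G → G.IsSub H →
          Nat.card G.graph.edgeSet ≤ Nat.card G₀.graph.edgeSet :=
        fun G hG hs => hG₀m ▸ le_csSup hSbdd ⟨G, hG, hs, rfl⟩
      obtain ⟨f, hf⟩ := hG₀sub
      have hfsurj : Function.Surjective f := surj_of_forbSub_sub hher hH hG₀ f hf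
      have hfbij : Function.Bijective f := ⟨hf, hfsurj⟩
      have hesurj : Function.Surjective f.mapEdgeSet := by
        apply mapEdgeSet_surj_of
        intro x y hadjxy
        by_contra hno
        push_neg at hno
        obtain ⟨a, ha⟩ := hfsurj x
        obtain ⟨b, hb⟩ := hfsurj y
        have hne' : a ≠ b := fun h => hadjxy.ne (by rw [← ha, ← hb, h])
        have hnadj : ¬ G₀.graph.Adj a b := fun h => hno a b h ha hb
        obtain ⟨G, hG, ⟨em⟩⟩ := hcond G₀ hG₀ a b hne' hnadj
        let fA : (addEdge G₀ a b).graph →g H.graph :=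
          ⟨f, fun {u v : G₀.V} h => by
            rcases h with h | h
            · exact f.map_adj h
            · rw [SimpleGraph.fromEdgeSet_adj] at h
              obtain ⟨hmem, -⟩ := h
              rw [Set.mem_singleton_iff, Sym2.eq_iff] at hmem
              rcases hmem with ⟨h1, h2⟩ | ⟨h1, h2⟩
              · rw [h1, h2, ha, hb]; exact hadjxy
              · rw [h1, h2, hb, ha]; exact hadjxy.symm⟩
        have hGsubH : G.IsSub H :=
          (FGraph.IsInduced.isSub ⟨em⟩ : G.IsSub (addEdge G₀ a b)).trans ⟨fA, hf⟩
        obtain ⟨g, hg⟩ := hGsubH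
        have hgsurj : Function.Surjective g := surj_of_forbSub_sub hher hH hG g hg
        have hcardG : Nat.card G.V = Nat.card H.V := Nat.card_eq_of_bijective g ⟨hg, hgsurj⟩
        have hcardG₀ : Nat.card G₀.V = Nat.card H.V := Nat.card_eq_of_bijective f hfbij
        have hembij : Function.Bijective em :=
          (Nat.bijective_iff_injective_and_card em).2 ⟨em.injective, by
            show Nat.card G.V = Nat.card G₀.V
            omega⟩
        have hmeasEq : Nat.card G.graph.edgeSet
            = Nat.card (addEdge G₀ a b).graph.edgeSet :=
          Nat.card_congr (isoOfBij em hembij).mapEdgeSet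
        have hmemAdd : s(a, b) ∈ (addEdge G₀ a b).graph.edgeSet :=
          ((addEdge G₀ a b).graph.mem_edgeSet).2
            (Or.inr ((SimpleGraph.fromEdgeSet_adj _).2 ⟨rfl, hne'⟩))
        have hss : G₀.graph.edgeSet ⊂ (addEdge G₀ a b).graph.edgeSet := by
          refine ⟨?_, fun hsub => hnadj ((G₀.graph.mem_edgeSet).1 (hsub hmemAdd))⟩
          intro e' he'
          show e' ∈ (G₀.graph ⊔ _).edgeSet
          rw [SimpleGraph.edgeSet_sup]
          exact Or.inl he'
        have hlt : Nat.card G₀.graph.edgeSet < Nat.card (addEdge G₀ a b).graph.edgeSet := by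
          rw [Nat.card_coe_set_eq, Nat.card_coe_set_eq]
          exact Set.ncard_lt_ncard hss (Set.toFinite _)
        have := hmax G hG ⟨g, hg⟩
        omega
      exact forbSub_iso hP (isoOfHom f hfbij hesurj) hG₀
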